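/- Let U be a real p×(p−K) matrix with orthonormal columns whose column span equals the null space of M̂^⊤ (i.e., M̂^⊤U = 0 and U^⊤U = I_{p−K}). Then for every γ > 0 and every y ∈ ℝ^p, the feasible GLS estimate satisfies θ̂_γ = (M̂^⊤M̂)⁻¹M̂^⊤y − (M̂^⊤M̂)⁻¹M̂^⊤ E E^⊤ U (U^⊤ Σ̂_γ U)⁻¹ U^⊤ y, where θ̂_γ = (M̂^⊤Σ̂_γ⁻¹M̂)⁻¹M̂^⊤Σ̂_γ⁻¹y. -/

import Mathlib

open Matrix

private lemma aux_mulVec_inj {α β : Type*} [Fintype α] [Fintype β] [DecidableEq β]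
    {B : Matrix α β ℝ} (h : IsUnit (Bᵀ * B)) : Function.Injective B.mulVec := by
  intro x y hxy
  have h2 : (Bᵀ * B) *ᵥ x = (Bᵀ * B) *ᵥ y := by
    rw [← Matrix.mulVec_mulVec, ← Matrix.mulVec_mulVec, hxy]
  exact (Matrix.mulVec_injective_iff_isUnit.mpr h) h2

private lemma aux_posDef_conj {α β : Type*} [Fintype α] [Fintype β] [DecidableEq α] [DecidableEq β]
    {Q : Matrix α α ℝ} (hQ : Q.PosDef) (B : Matrix α β ℝ)
    (hB : Function.Injective B.mulVec) : (Bᵀ * Q * B).PosDef := by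
  rw [Matrix.posDef_iff_dotProduct_mulVec]
  constructor
  · have h1 : Qᵀ = Q := by
      have := hQ.1
      rwa [Matrix.IsHermitian, conjTranspose_eq_transpose_of_trivial] at this
    show (Bᵀ * Q * B)ᴴ = _
    rw [conjTranspose_eq_transpose_of_trivial, transpose_mul, transpose_mul, transpose_transpose,
      h1, Matrix.mul_assoc]
  · intro x hx
    have hBx : B *ᵥ x ≠ 0 := by
      intro h
      apply hx
      apply hB
      simpa using h
    have := hQ.dotProduct_mulVec_pos hBx
    simpa [← Matrix.mulVec_mulVec, Matrix.dotProduct_mulVec, Matrix.vecMul_transpose] using this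

/-- With `U` an orthonormal basis of the null space of `M̂ᵀ`, the feasible GLS
estimate satisfies
`θ̂_γ = (M̂ᵀM̂)⁻¹M̂ᵀy − (M̂ᵀM̂)⁻¹M̂ᵀ E Eᵀ U (Uᵀ Σ̂_γ U)⁻¹ Uᵀ y`. -/
theorem stmt_17 (p n K : ℕ) (hK : 0 < K) (hKn : K ≤ n) (hnp : n < p)
    (X : Matrix (Fin p) (Fin n) ℝ) (A : Matrix (Fin n) (Fin K) ℝ)
    (hX : IsUnit (Xᵀ * X)) (hA : IsUnit (Aᵀ * A))
    (M : Matrix (Fin p) (Fin K) ℝ) (hM : M = X * A * (Aᵀ * A)⁻¹)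
    (N : Matrix (Fin n) (Fin (n - K)) ℝ)
    (hN1 : Nᵀ * N = 1) (hN2 : N * Nᵀ = 1 - A * (Aᵀ * A)⁻¹ * Aᵀ)
    (E : Matrix (Fin p) (Fin (n - K)) ℝ) (hE : E = X * N)
    (S : Matrix (Fin p) (Fin p) ℝ) (hS : S = E * Eᵀ)
    (Sg : ℝ → Matrix (Fin p) (Fin p) ℝ)
    (hSg : ∀ γ : ℝ, Sg γ = S + γ • (1 : Matrix (Fin p) (Fin p) ℝ))
    (U : Matrix (Fin p) (Fin (p - K)) ℝ)
    (hMU : Mᵀ * U = 0) (hUU : Uᵀ * U = 1) :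
    ∀ (γ : ℝ), 0 < γ → ∀ (y : Fin p → ℝ),
      ((Mᵀ * (Sg γ)⁻¹ * M)⁻¹ * (Mᵀ * (Sg γ)⁻¹)).mulVec y
        = ((Mᵀ * M)⁻¹ * Mᵀ).mulVec y
          - ((Mᵀ * M)⁻¹ * Mᵀ * E * Eᵀ * U * (Uᵀ * Sg γ * U)⁻¹ * Uᵀ).mulVec y := by
  -- injectivity of M
  have hXinj : Function.Injective X.mulVec := aux_mulVec_inj hX
  have hAinj : Function.Injective A.mulVec := aux_mulVec_inj hA
  have hAAinj : Function.Injective ((Aᵀ * A)⁻¹).mulVec :=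
    Matrix.mulVec_injective_iff_isUnit.mpr (Matrix.isUnit_nonsing_inv_iff.mpr hA)
  have hMinj : Function.Injective M.mulVec := by
    rw [hM]
    intro x y hxy
    simp only [← Matrix.mulVec_mulVec] at hxy
    exact hAAinj (hAinj (hXinj hxy))
  -- invertibility of MᵀM
  have hMMpd : (Mᵀ * M).PosDef := by
    have := aux_posDef_conj (Matrix.PosDef.one (n := Fin p) (R := ℝ)) M hMinj
    rwa [Matrix.mul_one] at this
  have hMM : IsUnit (Mᵀ * M) := hMMpd.isUnit
  -- injectivity of U
  have hUinj : Function.Injective U.mulVec := aux_mulVec_inj (hUU ▸ isUnit_one)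
  have hUtM : Uᵀ * M = 0 := by
    have := congrArg Matrix.transpose hMU
    simpa [Matrix.transpose_mul] using this
  -- the projector identity  M (MᵀM)⁻¹ Mᵀ + U Uᵀ = 1
  have hKp : K ≤ p := le_of_lt (lt_of_le_of_lt hKn hnp)
  have e : Fin K ⊕ Fin (p - K) ≃ Fin p :=
    finSumFinEquiv.trans (finCongr (by omega))
  have hproj : M * (Mᵀ * M)⁻¹ * Mᵀ + U * Uᵀ = 1 := by
    set V : Matrix (Fin p) (Fin K ⊕ Fin (p - K)) ℝ := fromCols M U with hV
    have hVt : Vᵀ = fromRows Mᵀ Uᵀ := by rw [hV, transpose_fromCols]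
    have hVtV : Vᵀ * V = fromBlocks (Mᵀ * M) 0 0 1 := by
      rw [hVt, hV, fromRows_mul_fromCols, hMU, hUtM, hUU]
    have hBlockUnit : IsUnit (fromBlocks (Mᵀ * M) (0 : Matrix (Fin K) (Fin (p - K)) ℝ)
        (0 : Matrix (Fin (p - K)) (Fin K) ℝ) (1 : Matrix (Fin (p - K)) (Fin (p - K)) ℝ)) := by
      rw [Matrix.isUnit_iff_isUnit_det, Matrix.det_fromBlocks_zero₂₁, Matrix.det_one, mul_one]
      exact (Matrix.isUnit_iff_isUnit_det _).mp hMM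
    have hBlockInv : (fromBlocks (Mᵀ * M) (0 : Matrix (Fin K) (Fin (p - K)) ℝ)
        (0 : Matrix (Fin (p - K)) (Fin K) ℝ) (1 : Matrix (Fin (p - K)) (Fin (p - K)) ℝ))⁻¹
        = fromBlocks (Mᵀ * M)⁻¹ 0 0 1 := by
      apply Matrix.inv_eq_right_inv
      rw [Matrix.fromBlocks_multiply]
      simp [Matrix.mul_nonsing_inv _ ((Matrix.isUnit_iff_isUnit_det _).mp hMM),
        Matrix.fromBlocks_one]
    set V' : Matrix (Fin p) (Fin p) ℝ := V.submatrix id e.symm with hV'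
    have hV'T : V'ᵀ = Vᵀ.submatrix e.symm id := by rw [hV', transpose_submatrix]
    have hVtV' : V'ᵀ * V' = (Vᵀ * V).submatrix e.symm e.symm := by
      rw [hV'T, hV']
      exact (Matrix.submatrix_mul Vᵀ V e.symm id e.symm Function.bijective_id).symm
    have hV'unit : IsUnit V' := by
      have h1 : IsUnit (V'ᵀ * V') := by
        rw [hVtV', hVtV]
        exact (Matrix.isUnit_submatrix_equiv e.symm e.symm).mpr hBlockUnit
      rw [Matrix.isUnit_iff_isUnit_det] at *
      rw [Matrix.det_mul, Matrix.det_transpose] at h1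
      exact isUnit_of_mul_isUnit_left h1
    have hdet : IsUnit V'.det := (Matrix.isUnit_iff_isUnit_det _).mp hV'unit
    have hdetT : IsUnit V'ᵀ.det := by rwa [Matrix.det_transpose]
    have hIdent : V' * (V'ᵀ * V')⁻¹ * V'ᵀ = 1 := by
      rw [Matrix.mul_inv_rev, ← Matrix.mul_assoc, Matrix.mul_nonsing_inv _ hdet,
        Matrix.one_mul, Matrix.nonsing_inv_mul _ hdetT]
    have hId2 : V * (Vᵀ * V)⁻¹ * Vᵀ = 1 := by
      rw [← hIdent, hVtV', Matrix.inv_submatrix_equiv, hV'T, hV',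
        ← Matrix.submatrix_mul V (Vᵀ * V)⁻¹ id ⇑e.symm ⇑e.symm e.symm.bijective,
        ← Matrix.submatrix_mul _ Vᵀ id ⇑e.symm id e.symm.bijective,
        Matrix.submatrix_id_id]
    rw [hVtV, hBlockInv, hV, hVt, fromCols_mul_fromBlocks, fromCols_mul_fromRows] at hId2
    simpa using hId2
  -- main part
  intro γ hγ y
  haveI : Nonempty (Fin p) := ⟨⟨0, by omega⟩⟩
  have hSpsd : S.PosSemidef := by
    rw [hS, ← conjTranspose_eq_transpose_of_trivial]
    exact Matrix.posSemidef_self_mul_conjTranspose E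
  have hγ1 : ((γ : ℝ) • (1 : Matrix (Fin p) (Fin p) ℝ)).PosDef := by
    rw [Matrix.smul_one_eq_diagonal]
    exact Matrix.posDef_diagonal_iff.mpr fun _ => hγ
  have hSigpd : (Sg γ).PosDef := by
    rw [hSg]
    exact Matrix.PosDef.posSemidef_add hSpsd hγ1
  have hSigdet : IsUnit (Sg γ).det := (Matrix.isUnit_iff_isUnit_det _).mp hSigpd.isUnit
  have hGpd : (Mᵀ * (Sg γ)⁻¹ * M).PosDef := aux_posDef_conj hSigpd.inv M hMinj
  have hGdet : IsUnit (Mᵀ * (Sg γ)⁻¹ * M).det :=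
    (Matrix.isUnit_iff_isUnit_det _).mp hGpd.isUnit
  have hUSUpd : (Uᵀ * Sg γ * U).PosDef := aux_posDef_conj hSigpd U hUinj
  have hUSUdet : IsUnit (Uᵀ * Sg γ * U).det :=
    (Matrix.isUnit_iff_isUnit_det _).mp hUSUpd.isUnit
  -- helper cancellation lemmas
  have cSig : ∀ W : Matrix (Fin p) (Fin p) ℝ, (Sg γ)⁻¹ * (Sg γ * W) = W := fun W => by
    rw [← Matrix.mul_assoc, Matrix.nonsing_inv_mul _ hSigdet, Matrix.one_mul]
  have hproj' : ∀ W : Matrix (Fin p) (Fin p) ℝ,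
      M * ((Mᵀ * M)⁻¹ * (Mᵀ * W)) = W - U * (Uᵀ * W) := by
    intro W
    have h1 := congrArg (· * W) hproj
    simp only [Matrix.add_mul, Matrix.one_mul, Matrix.mul_assoc] at h1
    exact eq_sub_of_add_eq h1
  have hprojP : M * ((Mᵀ * M)⁻¹ * Mᵀ) = 1 - U * Uᵀ := by
    have := hproj' 1
    simpa [Matrix.mul_one] using this
  have hMUW : ∀ W : Matrix (Fin (p - K)) (Fin p) ℝ, Mᵀ * (U * W) = 0 := fun W => by
    rw [← Matrix.mul_assoc, hMU, Matrix.zero_mul]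
  set W1 : Matrix (Fin (p - K)) (Fin (p - K)) ℝ := (Uᵀ * Sg γ * U)⁻¹ with hW1
  have cU : Uᵀ * (Sg γ * (U * (W1 * Uᵀ))) = Uᵀ := by
    simp only [← Matrix.mul_assoc]
    rw [hW1, Matrix.mul_nonsing_inv _ hUSUdet, Matrix.one_mul]
  have hMEU : Mᵀ * (E * (Eᵀ * (U * (W1 * Uᵀ)))) = Mᵀ * (Sg γ * (U * (W1 * Uᵀ))) := by
    rw [hSg, hS]
    rw [Matrix.add_mul, Matrix.mul_add, Matrix.smul_mul, Matrix.one_mul, Matrix.mul_smul,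
      hMUW, smul_zero, add_zero, Matrix.mul_assoc]
  -- the key identity
  set T2 : Matrix (Fin K) (Fin p) ℝ :=
    (Mᵀ * M)⁻¹ * Mᵀ * E * Eᵀ * U * W1 * Uᵀ with hT2
  set Z : Matrix (Fin K) (Fin p) ℝ := Mᵀ * ((Sg γ)⁻¹ * (U * Uᵀ)) with hZ
  have term1 : (Mᵀ * (Sg γ)⁻¹ * M) * ((Mᵀ * M)⁻¹ * Mᵀ) = Mᵀ * (Sg γ)⁻¹ - Z := by
    rw [hZ]
    simp only [Matrix.mul_assoc]
    rw [hprojP, Matrix.mul_sub, Matrix.mul_one, Matrix.mul_sub]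
  have term2 : (Mᵀ * (Sg γ)⁻¹ * M) * T2 = -Z := by
    rw [hT2, hZ]
    simp only [Matrix.mul_assoc]
    rw [hMEU, hproj' (Sg γ * (U * (W1 * Uᵀ))), Matrix.mul_sub, Matrix.mul_sub,
      cSig, hMUW, cU, zero_sub]
  have key : (Mᵀ * (Sg γ)⁻¹ * M) * ((Mᵀ * M)⁻¹ * Mᵀ - T2) = Mᵀ * (Sg γ)⁻¹ := by
    rw [Matrix.mul_sub, term1, term2]
    abel
  have hmat : (Mᵀ * (Sg γ)⁻¹ * M)⁻¹ * (Mᵀ * (Sg γ)⁻¹) = (Mᵀ * M)⁻¹ * Mᵀ - T2 := by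
    have h2 := congrArg (fun W => (Mᵀ * (Sg γ)⁻¹ * M)⁻¹ * W) key
    rw [← Matrix.mul_assoc, Matrix.nonsing_inv_mul _ hGdet, Matrix.one_mul] at h2
    exact h2.symm ▸ rfl
  rw [hmat, Matrix.sub_mulVec]
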